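/- Let G' be a snark with an edge E = (U,V); let T_{−2}, T_2 be the neighbors of U other than V and W_{−2}, W_2 the neighbors of V other than U, and let G₀' = G' − {U,V}. Let G* be a snark disjoint from G', let u and v be distinct non-adjacent vertices of G*, let u_{−1}, u_0, u_1 be the neighbors of u and v_{−1}, v_0, v_1 the neighbors of v, and let G₀* = G* − {u,v}. Let G be the cubic graph consisting of G₀', G₀*, six new vertices T_i, W_i, i ∈ {−1,0,1}, and fourteen new edges (T_i, T_{i+1}) and (W_i, W_{i+1}) for i ∈ {−2,−1,0,1}, and (T_i, u_i) and (v_i, W_i) for i ∈ {−1,0,1}. Then G admits no edge-3-coloring. -/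
import Mathlib


namespace SnarkPaper

open SimpleGraph

/-- The color group `Z₂ × Z₂`. -/
abbrev Color : Type := ZMod 2 × ZMod 2

/-- The color `a = (0,1)`. -/
def colA : Color := (0, 1)
/-- The color `b = (1,0)`. -/
def colB : Color := (1, 0)
/-- The color `c = (1,1)`. -/
def colC : Color := (1, 1)

/-- The set of the three nonzero elements of `Z₂ × Z₂` used as colors. -/
def colorSet : Set Color := {colA, colB, colC}

variable {V V₁ V₂ : Type*}

/-- Two edges are adjacent if they are distinct and share an endpoint. -/
def EdgesAdj (e f : Sym2 V) : Prop := e ≠ f ∧ ∃ x, x ∈ e ∧ x ∈ f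

/-- The set of edge-3-colorings of `G`: functions assigning to each edge of `G` one of the
three nonzero elements of `Z₂ × Z₂` so that adjacent edges get distinct values (and pinned
to `0` off the edge set, so that counting colorings is faithful). -/
def EC (G : SimpleGraph V) : Set (Sym2 V → Color) :=
  {γ | (∀ e ∈ G.edgeSet, γ e ∈ colorSet) ∧ (∀ e ∉ G.edgeSet, γ e = 0) ∧
       ∀ e ∈ G.edgeSet, ∀ f ∈ G.edgeSet, EdgesAdj e f → γ e ≠ γ f}

/-- The set of 3-edge-decompositions of `G`: partitions of the edge set of `G` into three
classes such that no two adjacent edges lie in the same class. -/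
def ED (G : SimpleGraph V) : Set (Set (Set (Sym2 V))) :=
  {D | D.ncard = 3 ∧ (∀ s ∈ D, s ⊆ G.edgeSet) ∧
       (∀ e ∈ G.edgeSet, ∃! s, s ∈ D ∧ e ∈ s) ∧
       (∀ s ∈ D, ∀ e ∈ s, ∀ f ∈ s, ¬ EdgesAdj e f)}

/-- Two edges lie in the same class of the decomposition `D`. -/
def SameClass (D : Set (Set (Sym2 V))) (e f : Sym2 V) : Prop :=
  ∃ s ∈ D, e ∈ s ∧ f ∈ s

/-- A graph is cubic if every vertex has degree 3. -/
def IsCubic (G : SimpleGraph V) : Prop := ∀ v, (G.neighborSet v).ncard = 3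

/-- A graph is quasi-cubic if every vertex has degree 1 or 3. -/
def IsQuasiCubic (G : SimpleGraph V) : Prop :=
  ∀ v, (G.neighborSet v).ncard = 1 ∨ (G.neighborSet v).ncard = 3

/-- `G` is cyclically `n`-edge-connected: for any two vertex-disjoint cycles `C₁`, `C₂` and
any set `S` of at most `n-1` edges of `G` containing no edge of `C₁` or `C₂`, deleting `S`
leaves a path from a vertex of `C₁` to a vertex of `C₂`. -/
def CyclicallyEdgeConnected (G : SimpleGraph V) (n : ℕ) : Prop :=
  ∀ ⦃x y : V⦄ (C₁ : G.Walk x x) (C₂ : G.Walk y y), C₁.IsCycle → C₂.IsCycle →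
    (∀ w, w ∈ C₁.support → w ∉ C₂.support) →
    ∀ S : Set (Sym2 V), S ⊆ G.edgeSet → S.ncard ≤ n - 1 →
      (∀ e ∈ S, e ∉ C₁.edges ∧ e ∉ C₂.edges) →
      ∃ x' ∈ C₁.support, ∃ y' ∈ C₂.support, (G.deleteEdges S).Reachable x' y'

/-- A snark: a connected cubic graph with girth at least 5 which is cyclically
4-edge-connected and admits no edge-3-coloring. -/
def IsSnark (G : SimpleGraph V) : Prop :=
  G.Connected ∧ IsCubic G ∧ 5 ≤ G.girth ∧ CyclicallyEdgeConnected G 4 ∧ EC G = ∅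

/-- The edges `d₁` and `d₂` lie in a common (two-colored) Kempe cycle for the coloring `γ`. -/
def InCommonKempeCycle (G : SimpleGraph V) (γ : Sym2 V → Color) (d₁ d₂ : Sym2 V) : Prop :=
  ∃ x ∈ colorSet, ∃ y ∈ colorSet, x ≠ y ∧
    ∃ (a : V) (C : G.Walk a a), C.IsCycle ∧
      (∀ e ∈ C.edges, γ e = x ∨ γ e = y) ∧ d₁ ∈ C.edges ∧ d₂ ∈ C.edges

/-- Two edges of `G` are orthogonal if no edge-3-coloring of `G` puts them in a common
Kempe cycle. -/
def OrthogonalEdges (G : SimpleGraph V) (d₁ d₂ : Sym2 V) : Prop :=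
  d₁ ∈ G.edgeSet ∧ d₂ ∈ G.edgeSet ∧ ∀ γ ∈ EC G, ¬ InCommonKempeCycle G γ d₁ d₂

/-- The graph `G_e` for the edge `e = s(u,v)`: delete `u`, `v` and the five edges incident
to them (leaving `u` and `v` as isolated vertices), and add the new edge `d₁` joining the two
other neighbors of `u` and the new edge `d₂` joining the two other neighbors of `v`. -/
def edgeDeleted (G : SimpleGraph V) (u v : V) : SimpleGraph V :=
  SimpleGraph.fromEdgeSet
    ({e ∈ G.edgeSet | u ∉ e ∧ v ∉ e} ∪
     {e | ∃ x y, e = s(x, y) ∧ x ≠ y ∧ G.Adj u x ∧ G.Adj u y ∧ x ≠ v ∧ y ≠ v} ∪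
     {e | ∃ x y, e = s(x, y) ∧ x ≠ y ∧ G.Adj v x ∧ G.Adj v y ∧ x ≠ u ∧ y ≠ u})


/-- The superposed graph `G` of Context 5.2: the edge `E = (U,V)` of the snark `G'` is
replaced by the snark `G*` with two non-adjacent vertices `u`, `v` split into strands.
The six new vertices are `T_{-1}, T_0, T_1, W_{-1}, W_0, W_1`, encoded as
`Fin 6` elements `0,1,2,3,4,5` respectively; `Tm2, T2` are the neighbors of `U` other
than `V`, and `Wm2, W2` the neighbors of `V` other than `U`; `um, u0, up` are the
neighbors of `u` and `vm, v0, vp` the neighbors of `v` in `G*`. -/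
def superposed (G1 : SimpleGraph V₁) (G2 : SimpleGraph V₂)
    (U W : V₁) (Tm2 T2 Wm2 W2 : V₁) (u v um u0 up vm v0 vp : V₂) :
    SimpleGraph (V₁ ⊕ V₂ ⊕ Fin 6) :=
  SimpleGraph.fromEdgeSet
    ((Sym2.map (Sum.inl : V₁ → V₁ ⊕ V₂ ⊕ Fin 6)) '' {e ∈ G1.edgeSet | U ∉ e ∧ W ∉ e} ∪
     (Sym2.map (fun x => (Sum.inr (Sum.inl x) : V₁ ⊕ V₂ ⊕ Fin 6))) ''
        {e ∈ G2.edgeSet | u ∉ e ∧ v ∉ e} ∪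
     {s(Sum.inl Tm2, Sum.inr (Sum.inr 0)),
      s(Sum.inr (Sum.inr 0), Sum.inr (Sum.inr 1)),
      s(Sum.inr (Sum.inr 1), Sum.inr (Sum.inr 2)),
      s(Sum.inr (Sum.inr 2), Sum.inl T2),
      s(Sum.inl Wm2, Sum.inr (Sum.inr 3)),
      s(Sum.inr (Sum.inr 3), Sum.inr (Sum.inr 4)),
      s(Sum.inr (Sum.inr 4), Sum.inr (Sum.inr 5)),
      s(Sum.inr (Sum.inr 5), Sum.inl W2),
      s(Sum.inr (Sum.inr 0), Sum.inr (Sum.inl um)),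
      s(Sum.inr (Sum.inr 1), Sum.inr (Sum.inl u0)),
      s(Sum.inr (Sum.inr 2), Sum.inr (Sum.inl up)),
      s(Sum.inr (Sum.inl vm), Sum.inr (Sum.inr 3)),
      s(Sum.inr (Sum.inl v0), Sum.inr (Sum.inr 4)),
      s(Sum.inr (Sum.inl vp), Sum.inr (Sum.inr 5))})


section Helpers
variable {V V₁ V₂ : Type*}

-- color lemmas
lemma mem_colorSet_iff {x : Color} : x ∈ colorSet ↔ x = colA ∨ x = colB ∨ x = colC := by
  simp [colorSet]

lemma color_add_self (x : Color) : x + x = 0 := by revert x; decide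

lemma color_ne_zero {x : Color} (h : x ∈ colorSet) : x ≠ 0 := by
  rw [mem_colorSet_iff] at h; rcases h with rfl|rfl|rfl <;> decide

lemma color_sum3 {x y z : Color} (hx : x ∈ colorSet) (hy : y ∈ colorSet) (hz : z ∈ colorSet)
    (hxy : x ≠ y) (hxz : x ≠ z) (hyz : y ≠ z) : x + y + z = 0 := by
  rw [mem_colorSet_iff] at hx hy hz
  rcases hx with rfl|rfl|rfl <;> rcases hy with rfl|rfl|rfl <;> rcases hz with rfl|rfl|rfl <;>
    first
      | exact absurd rfl hxy
      | exact absurd rfl hxz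
      | exact absurd rfl hyz
      | decide

lemma color_add_mem {x y : Color} (hx : x ∈ colorSet) (hy : y ∈ colorSet) (h : x ≠ y) :
    x + y ∈ colorSet := by
  rw [mem_colorSet_iff] at hx hy ⊢
  rcases hx with rfl|rfl|rfl <;> rcases hy with rfl|rfl|rfl <;>
    first
      | exact absurd rfl h
      | decide

lemma color_distinct_of_sum {x y z : Color} (hx : x ∈ colorSet) (hy : y ∈ colorSet)
    (hz : z ∈ colorSet) (h : x + y + z = 0) : x ≠ y ∧ x ≠ z ∧ y ≠ z := by
  rw [mem_colorSet_iff] at hx hy hz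
  rcases hx with rfl|rfl|rfl <;> rcases hy with rfl|rfl|rfl <;> rcases hz with rfl|rfl|rfl <;>
    first
      | exact absurd h (by decide)
      | exact ⟨by decide, by decide, by decide⟩

-- Sym2 helpers
lemma sym2_exists (e : Sym2 V) : ∃ x y, e = s(x, y) :=
  e.inductionOn fun x y => ⟨x, y, rfl⟩

lemma sym2_map_eq {β : Type*} {f : V → β} {e : Sym2 V} {p q : β}
    (h : Sym2.map f e = s(p, q)) : ∃ x y, e = s(x, y) ∧ f x = p ∧ f y = q := by
  obtain ⟨x, y, rfl⟩ := sym2_exists e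
  rw [Sym2.map_pair_eq, Sym2.eq_iff] at h
  rcases h with ⟨h1, h2⟩ | ⟨h1, h2⟩
  · exact ⟨x, y, rfl, h1, h2⟩
  · exact ⟨y, x, Sym2.eq_swap, h2, h1⟩


/-- `fV i` is the `i`-th new vertex. -/
def fV (i : Fin 6) : V₁ ⊕ V₂ ⊕ Fin 6 := Sum.inr (Sum.inr i)
/-- `iV z` is the copy of the `G₂`-vertex `z`. -/
def iV (z : V₂) : V₁ ⊕ V₂ ⊕ Fin 6 := Sum.inr (Sum.inl z)

@[simp] lemma fV_def (i : Fin 6) : (fV i : V₁ ⊕ V₂ ⊕ Fin 6) = Sum.inr (Sum.inr i) := rfl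
@[simp] lemma iV_def (z : V₂) : (iV z : V₁ ⊕ V₂ ⊕ Fin 6) = Sum.inr (Sum.inl z) := rfl

/-- symmetric pair spec -/
abbrev Pr {α : Type*} (p q A B : α) : Prop := (p = A ∧ q = B) ∨ (p = B ∧ q = A)

def AdjSpec (G1 : SimpleGraph V₁) (G2 : SimpleGraph V₂)
    (U W Tm2 T2 Wm2 W2 : V₁) (u v um u0 up vm v0 vp : V₂)
    (p q : V₁ ⊕ V₂ ⊕ Fin 6) : Prop :=
  (∃ x y, p = Sum.inl x ∧ q = Sum.inl y ∧ G1.Adj x y ∧ x ≠ U ∧ x ≠ W ∧ y ≠ U ∧ y ≠ W) ∨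
  (∃ x y, p = iV x ∧ q = iV y ∧ G2.Adj x y ∧ x ≠ u ∧ x ≠ v ∧ y ≠ u ∧ y ≠ v) ∨
  Pr p q (Sum.inl Tm2) (fV 0) ∨ Pr p q (fV 0) (fV 1) ∨ Pr p q (fV 1) (fV 2) ∨
  Pr p q (fV 2) (Sum.inl T2) ∨ Pr p q (Sum.inl Wm2) (fV 3) ∨ Pr p q (fV 3) (fV 4) ∨
  Pr p q (fV 4) (fV 5) ∨ Pr p q (fV 5) (Sum.inl W2) ∨
  Pr p q (fV 0) (iV um) ∨ Pr p q (fV 1) (iV u0) ∨ Pr p q (fV 2) (iV up) ∨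
  Pr p q (iV vm) (fV 3) ∨ Pr p q (iV v0) (fV 4) ∨ Pr p q (iV vp) (fV 5)

set_option maxHeartbeats 3200000 in
lemma superposed_adj_iff {G1 : SimpleGraph V₁} {G2 : SimpleGraph V₂}
    {U W Tm2 T2 Wm2 W2 : V₁} {u v um u0 up vm v0 vp : V₂}
    {p q : V₁ ⊕ V₂ ⊕ Fin 6} :
    (superposed G1 G2 U W Tm2 T2 Wm2 W2 u v um u0 up vm v0 vp).Adj p q ↔
      AdjSpec G1 G2 U W Tm2 T2 Wm2 W2 u v um u0 up vm v0 vp p q := by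
  constructor
  · intro h
    unfold superposed at h
    rw [SimpleGraph.fromEdgeSet_adj] at h
    obtain ⟨hm, hne⟩ := h
    rcases hm with (hm | hm) | hm
    · left
      obtain ⟨e, ⟨he1, he2, he3⟩, hmap⟩ := hm
      obtain ⟨x, y, rfl, hfx, hfy⟩ := sym2_map_eq hmap
      rw [Sym2.mem_iff] at he2 he3
      push_neg at he2 he3
      exact ⟨x, y, hfx.symm, hfy.symm, (SimpleGraph.mem_edgeSet _).mp he1,
        (Ne.symm he2.1), (Ne.symm he3.1), (Ne.symm he2.2), (Ne.symm he3.2)⟩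
    · right; left
      obtain ⟨e, ⟨he1, he2, he3⟩, hmap⟩ := hm
      obtain ⟨x, y, rfl, hfx, hfy⟩ := sym2_map_eq hmap
      rw [Sym2.mem_iff] at he2 he3
      push_neg at he2 he3
      exact ⟨x, y, hfx.symm, hfy.symm, (SimpleGraph.mem_edgeSet _).mp he1,
        (Ne.symm he2.1), (Ne.symm he3.1), (Ne.symm he2.2), (Ne.symm he3.2)⟩
    · right; right
      simp only [Set.mem_insert_iff, Set.mem_singleton_iff, Sym2.eq_iff] at hm
      exact hm
  · intro h
    unfold superposed
    rw [SimpleGraph.fromEdgeSet_adj]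
    unfold AdjSpec Pr at h
    rcases h with ⟨x, y, rfl, rfl, ha, h1, h2, h3, h4⟩ | ⟨x, y, rfl, rfl, ha, h1, h2, h3, h4⟩ |
      h | h | h | h | h | h | h | h | h | h | h | h | h | h
    · refine ⟨Or.inl (Or.inl ⟨s(x, y), ⟨(SimpleGraph.mem_edgeSet _).mpr ha, ?_, ?_⟩,
        Sym2.map_pair_eq _ _ _⟩), by simpa using ha.ne⟩
      · intro hU; rcases Sym2.mem_iff.mp hU with h | h
        exacts [h1 h.symm, h3 h.symm]
      · intro hW; rcases Sym2.mem_iff.mp hW with h | h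
        exacts [h2 h.symm, h4 h.symm]
    · refine ⟨Or.inl (Or.inr ⟨s(x, y), ⟨(SimpleGraph.mem_edgeSet _).mpr ha, ?_, ?_⟩, ?_⟩),
        by simpa using ha.ne⟩
      · intro hU; rcases Sym2.mem_iff.mp hU with h | h
        exacts [h1 h.symm, h3 h.symm]
      · intro hW; rcases Sym2.mem_iff.mp hW with h | h
        exacts [h2 h.symm, h4 h.symm]
      · rw [Sym2.map_pair_eq]; rfl
    all_goals
      rcases h with ⟨rfl, rfl⟩ | ⟨rfl, rfl⟩ <;>
        exact ⟨Or.inr (by simp [Sym2.eq_iff, fV, iV]), by simp [fV, iV]⟩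


open Classical in
/-- where a `G₂`-neighbor `w` of a vertex `z ∉ {u,v}` of `G₂` lands in the superposed graph -/
noncomputable def nmap2 (u v um u0 up vm v0 vp : V₂) (z w : V₂) : V₁ ⊕ V₂ ⊕ Fin 6 :=
  if w = u then (if z = um then fV 0 else if z = u0 then fV 1 else fV 2)
  else if w = v then (if z = vm then fV 3 else if z = v0 then fV 4 else fV 5)
  else iV w

open Classical in
/-- where a `G₁`-neighbor `y` of a vertex `x ∉ {U,W}` of `G₁` lands in the superposed graph -/
noncomputable def nmap1 (U W Tm2 Wm2 : V₁) (x y : V₁) : V₁ ⊕ V₂ ⊕ Fin 6 :=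
  if y = U then (if x = Tm2 then fV 0 else fV 2)
  else if y = W then (if x = Wm2 then fV 3 else fV 5)
  else Sum.inl y

section nmap2lemmas
variable {u v um u0 up vm v0 vp : V₂}

lemma nmap2_um : (nmap2 u v um u0 up vm v0 vp um u : V₁ ⊕ V₂ ⊕ Fin 6) = fV 0 := by
  unfold nmap2; rw [if_pos rfl, if_pos rfl]

lemma nmap2_u0 (h : u0 ≠ um) :
    (nmap2 u v um u0 up vm v0 vp u0 u : V₁ ⊕ V₂ ⊕ Fin 6) = fV 1 := by
  unfold nmap2; rw [if_pos rfl, if_neg h, if_pos rfl]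

lemma nmap2_up (h1 : up ≠ um) (h2 : up ≠ u0) :
    (nmap2 u v um u0 up vm v0 vp up u : V₁ ⊕ V₂ ⊕ Fin 6) = fV 2 := by
  unfold nmap2; rw [if_pos rfl, if_neg h1, if_neg h2]

lemma nmap2_vm (hvu : v ≠ u) :
    (nmap2 u v um u0 up vm v0 vp vm v : V₁ ⊕ V₂ ⊕ Fin 6) = fV 3 := by
  unfold nmap2; rw [if_neg hvu, if_pos rfl, if_pos rfl]

lemma nmap2_v0 (hvu : v ≠ u) (h : v0 ≠ vm) :
    (nmap2 u v um u0 up vm v0 vp v0 v : V₁ ⊕ V₂ ⊕ Fin 6) = fV 4 := by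
  unfold nmap2; rw [if_neg hvu, if_pos rfl, if_neg h, if_pos rfl]

lemma nmap2_vp (hvu : v ≠ u) (h1 : vp ≠ vm) (h2 : vp ≠ v0) :
    (nmap2 u v um u0 up vm v0 vp vp v : V₁ ⊕ V₂ ⊕ Fin 6) = fV 5 := by
  unfold nmap2; rw [if_neg hvu, if_pos rfl, if_neg h1, if_neg h2]

lemma nmap2_other {z w : V₂} (h1 : w ≠ u) (h2 : w ≠ v) :
    (nmap2 u v um u0 up vm v0 vp z w : V₁ ⊕ V₂ ⊕ Fin 6) = iV w := by
  unfold nmap2; rw [if_neg h1, if_neg h2]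

lemma nmap2_cases (z w : V₂) :
    (w = u ∧ ((nmap2 u v um u0 up vm v0 vp z w : V₁ ⊕ V₂ ⊕ Fin 6) = fV 0 ∨
       (nmap2 u v um u0 up vm v0 vp z w : V₁ ⊕ V₂ ⊕ Fin 6) = fV 1 ∨
       (nmap2 u v um u0 up vm v0 vp z w : V₁ ⊕ V₂ ⊕ Fin 6) = fV 2)) ∨
    (w = v ∧ ((nmap2 u v um u0 up vm v0 vp z w : V₁ ⊕ V₂ ⊕ Fin 6) = fV 3 ∨
       (nmap2 u v um u0 up vm v0 vp z w : V₁ ⊕ V₂ ⊕ Fin 6) = fV 4 ∨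
       (nmap2 u v um u0 up vm v0 vp z w : V₁ ⊕ V₂ ⊕ Fin 6) = fV 5)) ∨
    (w ≠ u ∧ w ≠ v ∧ (nmap2 u v um u0 up vm v0 vp z w : V₁ ⊕ V₂ ⊕ Fin 6) = iV w) := by
  by_cases h1 : w = u
  · refine Or.inl ⟨h1, ?_⟩
    unfold nmap2; rw [if_pos h1]
    by_cases h2 : z = um
    · rw [if_pos h2]; exact Or.inl rfl
    · rw [if_neg h2]
      by_cases h3 : z = u0
      · rw [if_pos h3]; exact Or.inr (Or.inl rfl)
      · rw [if_neg h3]; exact Or.inr (Or.inr rfl)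
  · by_cases h4 : w = v
    · refine Or.inr (Or.inl ⟨h4, ?_⟩)
      unfold nmap2; rw [if_neg h1, if_pos h4]
      by_cases h2 : z = vm
      · rw [if_pos h2]; exact Or.inl rfl
      · rw [if_neg h2]
        by_cases h3 : z = v0
        · rw [if_pos h3]; exact Or.inr (Or.inl rfl)
        · rw [if_neg h3]; exact Or.inr (Or.inr rfl)
    · exact Or.inr (Or.inr ⟨h1, h4, nmap2_other h1 h4⟩)

lemma nmap2_inj {z w w' : V₂}
    (h : (nmap2 u v um u0 up vm v0 vp z w : V₁ ⊕ V₂ ⊕ Fin 6) =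
      nmap2 u v um u0 up vm v0 vp z w') : w = w' := by
  rcases nmap2_cases (u := u) (v := v) (um := um) (u0 := u0) (up := up)
      (vm := vm) (v0 := v0) (vp := vp) z w with ⟨hw, hv1⟩ | ⟨hw, hv1⟩ | ⟨hw1, hw2, hv1⟩ <;>
    rcases nmap2_cases (u := u) (v := v) (um := um) (u0 := u0) (up := up)
      (vm := vm) (v0 := v0) (vp := vp) z w' with ⟨hw', hv1'⟩ | ⟨hw', hv1'⟩ | ⟨hw1', hw2', hv1'⟩
  · exact hw.trans hw'.symm
  · exfalso; rcases hv1 with hv|hv|hv <;> rcases hv1' with hv'|hv'|hv' <;>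
      rw [hv, hv'] at h <;> simp [fV] at h
  · exfalso; rcases hv1 with hv|hv|hv <;> rw [hv, hv1'] at h <;> simp [fV, iV] at h
  · exfalso; rcases hv1 with hv|hv|hv <;> rcases hv1' with hv'|hv'|hv' <;>
      rw [hv, hv'] at h <;> simp [fV] at h
  · exact hw.trans hw'.symm
  · exfalso; rcases hv1 with hv|hv|hv <;> rw [hv, hv1'] at h <;> simp [fV, iV] at h
  · exfalso; rcases hv1' with hv'|hv'|hv' <;> rw [hv1, hv'] at h <;> simp [fV, iV] at h
  · exfalso; rcases hv1' with hv'|hv'|hv' <;> rw [hv1, hv'] at h <;> simp [fV, iV] at h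
  · rw [hv1, hv1'] at h; simpa [iV] using h

end nmap2lemmas

section nmap1lemmas
variable {U W Tm2 Wm2 : V₁}

lemma nmap1_UTm2 : (nmap1 U W Tm2 Wm2 Tm2 U : V₁ ⊕ V₂ ⊕ Fin 6) = fV 0 := by
  unfold nmap1; rw [if_pos rfl, if_pos rfl]

lemma nmap1_UT2 {x : V₁} (h : x ≠ Tm2) : (nmap1 U W Tm2 Wm2 x U : V₁ ⊕ V₂ ⊕ Fin 6) = fV 2 := by
  unfold nmap1; rw [if_pos rfl, if_neg h]

lemma nmap1_WWm2 (hWU : W ≠ U) : (nmap1 U W Tm2 Wm2 Wm2 W : V₁ ⊕ V₂ ⊕ Fin 6) = fV 3 := by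
  unfold nmap1; rw [if_neg hWU, if_pos rfl, if_pos rfl]

lemma nmap1_WW2 {x : V₁} (hWU : W ≠ U) (h : x ≠ Wm2) :
    (nmap1 U W Tm2 Wm2 x W : V₁ ⊕ V₂ ⊕ Fin 6) = fV 5 := by
  unfold nmap1; rw [if_neg hWU, if_pos rfl, if_neg h]

lemma nmap1_other {x y : V₁} (h1 : y ≠ U) (h2 : y ≠ W) :
    (nmap1 U W Tm2 Wm2 x y : V₁ ⊕ V₂ ⊕ Fin 6) = Sum.inl y := by
  unfold nmap1; rw [if_neg h1, if_neg h2]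

lemma nmap1_cases (x y : V₁) :
    (y = U ∧ ((nmap1 U W Tm2 Wm2 x y : V₁ ⊕ V₂ ⊕ Fin 6) = fV 0 ∨
       (nmap1 U W Tm2 Wm2 x y : V₁ ⊕ V₂ ⊕ Fin 6) = fV 2)) ∨
    (y = W ∧ ((nmap1 U W Tm2 Wm2 x y : V₁ ⊕ V₂ ⊕ Fin 6) = fV 3 ∨
       (nmap1 U W Tm2 Wm2 x y : V₁ ⊕ V₂ ⊕ Fin 6) = fV 5)) ∨
    (y ≠ U ∧ y ≠ W ∧ (nmap1 U W Tm2 Wm2 x y : V₁ ⊕ V₂ ⊕ Fin 6) = Sum.inl y) := by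
  by_cases h1 : y = U
  · refine Or.inl ⟨h1, ?_⟩
    unfold nmap1; rw [if_pos h1]
    by_cases h2 : x = Tm2
    · rw [if_pos h2]; exact Or.inl rfl
    · rw [if_neg h2]; exact Or.inr rfl
  · by_cases h4 : y = W
    · refine Or.inr (Or.inl ⟨h4, ?_⟩)
      unfold nmap1; rw [if_neg h1, if_pos h4]
      by_cases h2 : x = Wm2
      · rw [if_pos h2]; exact Or.inl rfl
      · rw [if_neg h2]; exact Or.inr rfl
    · exact Or.inr (Or.inr ⟨h1, h4, nmap1_other h1 h4⟩)

lemma nmap1_inj {x y y' : V₁}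
    (h : (nmap1 U W Tm2 Wm2 x y : V₁ ⊕ V₂ ⊕ Fin 6) = nmap1 U W Tm2 Wm2 x y') : y = y' := by
  rcases nmap1_cases (U := U) (W := W) (Tm2 := Tm2) (Wm2 := Wm2) (V₂ := V₂) x y with
      ⟨hw, hv1⟩ | ⟨hw, hv1⟩ | ⟨hw1, hw2, hv1⟩ <;>
    rcases nmap1_cases (U := U) (W := W) (Tm2 := Tm2) (Wm2 := Wm2) (V₂ := V₂) x y' with
      ⟨hw', hv1'⟩ | ⟨hw', hv1'⟩ | ⟨hw1', hw2', hv1'⟩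
  · exact hw.trans hw'.symm
  · exfalso; rcases hv1 with hv|hv <;> rcases hv1' with hv'|hv' <;>
      rw [hv, hv'] at h <;> simp [fV] at h
  · exfalso; rcases hv1 with hv|hv <;> rw [hv, hv1'] at h <;> simp [fV] at h
  · exfalso; rcases hv1 with hv|hv <;> rcases hv1' with hv'|hv' <;>
      rw [hv, hv'] at h <;> simp [fV] at h
  · exact hw.trans hw'.symm
  · exfalso; rcases hv1 with hv|hv <;> rw [hv, hv1'] at h <;> simp [fV] at h
  · exfalso; rcases hv1' with hv'|hv' <;> rw [hv1, hv'] at h <;> simp [fV] at h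
  · exfalso; rcases hv1' with hv'|hv' <;> rw [hv1, hv'] at h <;> simp [fV] at h
  · rw [hv1, hv1'] at h; simpa using h

end nmap1lemmas

end Helpers

set_option maxHeartbeats 4000000 in
/-- **Context 5.2 / Kochol superposition.** The graph `G` obtained from the snark `G'` by
superimposing the snark `G*` in place of the edge `E = (U,V)` admits no edge-3-coloring. -/
theorem statement_15 {V₁ V₂ : Type*} [Fintype V₁] [Fintype V₂]
    (G1 : SimpleGraph V₁) (G2 : SimpleGraph V₂) (hG1 : IsSnark G1) (hG2 : IsSnark G2)
    (U W : V₁) (hUW : G1.Adj U W)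
    (Tm2 T2 : V₁) (hTm2 : G1.Adj U Tm2) (hT2 : G1.Adj U T2) (hT : Tm2 ≠ T2)
    (hTm2W : Tm2 ≠ W) (hT2W : T2 ≠ W)
    (Wm2 W2 : V₁) (hWm2 : G1.Adj W Wm2) (hW2 : G1.Adj W W2) (hWd : Wm2 ≠ W2)
    (hWm2U : Wm2 ≠ U) (hW2U : W2 ≠ U)
    (u v : V₂) (huv : u ≠ v) (hnadj : ¬ G2.Adj u v)
    (um u0 up : V₂) (hum : G2.Adj u um) (hu0 : G2.Adj u u0) (hup : G2.Adj u up)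
    (humu0 : um ≠ u0) (humup : um ≠ up) (hu0up : u0 ≠ up)
    (vm v0 vp : V₂) (hvm : G2.Adj v vm) (hv0 : G2.Adj v v0) (hvp : G2.Adj v vp)
    (hvmv0 : vm ≠ v0) (hvmvp : vm ≠ vp) (hv0vp : v0 ≠ vp) :
    EC (superposed G1 G2 U W Tm2 T2 Wm2 W2 u v um u0 up vm v0 vp) = ∅ := by
  classical
  rw [Set.eq_empty_iff_forall_notMem]
  intro γ hγ
  obtain ⟨H, hH⟩ : ∃ H', H' = superposed G1 G2 U W Tm2 T2 Wm2 W2 u v um u0 up vm v0 vp :=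
    ⟨_, rfl⟩
  rw [← hH] at hγ
  obtain ⟨hγc, hγ0, hγd⟩ := hγ
  have hcub1 : IsCubic G1 := hG1.2.1
  have hcub2 : IsCubic G2 := hG2.2.1
  have hEC1 : EC G1 = ∅ := hG1.2.2.2.2
  have hEC2 : EC G2 = ∅ := hG2.2.2.2.2
  have hAdj : ∀ p q : V₁ ⊕ V₂ ⊕ Fin 6,
      H.Adj p q ↔ AdjSpec G1 G2 U W Tm2 T2 Wm2 W2 u v um u0 up vm v0 vp p q := by
    rw [hH]; intro p q; exact superposed_adj_iff
  have hvum : v ≠ um := fun h => hnadj (by rw [h]; exact hum)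
  have hvu0 : v ≠ u0 := fun h => hnadj (by rw [h]; exact hu0)
  have hvup : v ≠ up := fun h => hnadj (by rw [h]; exact hup)
  have huvm : u ≠ vm := fun h => hnadj (by rw [h]; exact hvm.symm)
  have huv0 : u ≠ v0 := fun h => hnadj (by rw [h]; exact hv0.symm)
  have huvp : u ≠ vp := fun h => hnadj (by rw [h]; exact hvp.symm)
  have hA1 : H.Adj (Sum.inl Tm2) (fV 0) :=
    (hAdj _ _).mpr (Or.inr (Or.inr (Or.inl (Or.inl ⟨rfl, rfl⟩))))
  have hA2 : H.Adj (fV 0) (fV 1) :=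
    (hAdj _ _).mpr (Or.inr (Or.inr (Or.inr (Or.inl (Or.inl ⟨rfl, rfl⟩)))))
  have hA3 : H.Adj (fV 1) (fV 2) :=
    (hAdj _ _).mpr (Or.inr (Or.inr (Or.inr (Or.inr (Or.inl (Or.inl ⟨rfl, rfl⟩))))))
  have hA4 : H.Adj (fV 2) (Sum.inl T2) :=
    (hAdj _ _).mpr (Or.inr (Or.inr (Or.inr (Or.inr (Or.inr (Or.inl (Or.inl ⟨rfl, rfl⟩)))))))
  have hA5 : H.Adj (Sum.inl Wm2) (fV 3) :=
    (hAdj _ _).mpr (Or.inr (Or.inr (Or.inr (Or.inr (Or.inr (Or.inr (Or.inl (Or.inl ⟨rfl, rfl⟩))))))))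
  have hA6 : H.Adj (fV 3) (fV 4) :=
    (hAdj _ _).mpr (Or.inr (Or.inr (Or.inr (Or.inr (Or.inr (Or.inr (Or.inr (Or.inl (Or.inl ⟨rfl, rfl⟩)))))))))
  have hA7 : H.Adj (fV 4) (fV 5) :=
    (hAdj _ _).mpr (Or.inr (Or.inr (Or.inr (Or.inr (Or.inr (Or.inr (Or.inr (Or.inr (Or.inl (Or.inl ⟨rfl, rfl⟩))))))))))
  have hA8 : H.Adj (fV 5) (Sum.inl W2) :=
    (hAdj _ _).mpr (Or.inr (Or.inr (Or.inr (Or.inr (Or.inr (Or.inr (Or.inr (Or.inr (Or.inr (Or.inl (Or.inl ⟨rfl, rfl⟩)))))))))))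
  have hA9 : H.Adj (fV 0) (iV um) :=
    (hAdj _ _).mpr (Or.inr (Or.inr (Or.inr (Or.inr (Or.inr (Or.inr (Or.inr (Or.inr (Or.inr (Or.inr (Or.inl (Or.inl ⟨rfl, rfl⟩))))))))))))
  have hA10 : H.Adj (fV 1) (iV u0) :=
    (hAdj _ _).mpr (Or.inr (Or.inr (Or.inr (Or.inr (Or.inr (Or.inr (Or.inr (Or.inr (Or.inr (Or.inr (Or.inr (Or.inl (Or.inl ⟨rfl, rfl⟩)))))))))))))
  have hA11 : H.Adj (fV 2) (iV up) :=
    (hAdj _ _).mpr (Or.inr (Or.inr (Or.inr (Or.inr (Or.inr (Or.inr (Or.inr (Or.inr (Or.inr (Or.inr (Or.inr (Or.inr (Or.inl (Or.inl ⟨rfl, rfl⟩))))))))))))))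
  have hA12 : H.Adj (iV vm) (fV 3) :=
    (hAdj _ _).mpr (Or.inr (Or.inr (Or.inr (Or.inr (Or.inr (Or.inr (Or.inr (Or.inr (Or.inr (Or.inr (Or.inr (Or.inr (Or.inr (Or.inl (Or.inl ⟨rfl, rfl⟩)))))))))))))))
  have hA13 : H.Adj (iV v0) (fV 4) :=
    (hAdj _ _).mpr (Or.inr (Or.inr (Or.inr (Or.inr (Or.inr (Or.inr (Or.inr (Or.inr (Or.inr (Or.inr (Or.inr (Or.inr (Or.inr (Or.inr (Or.inl (Or.inl ⟨rfl, rfl⟩))))))))))))))))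
  have hA14 : H.Adj (iV vp) (fV 5) :=
    (hAdj _ _).mpr (Or.inr (Or.inr (Or.inr (Or.inr (Or.inr (Or.inr (Or.inr (Or.inr (Or.inr (Or.inr (Or.inr (Or.inr (Or.inr (Or.inr (Or.inr (Or.inl ⟨rfl, rfl⟩))))))))))))))))
  have hmemH : ∀ {p q : V₁ ⊕ V₂ ⊕ Fin 6}, H.Adj p q → s(p, q) ∈ H.edgeSet :=
    fun h => (SimpleGraph.mem_edgeSet _).mpr h
  have hcol : ∀ p q : V₁ ⊕ V₂ ⊕ Fin 6, H.Adj p q → γ s(p, q) ∈ colorSet :=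
    fun p q h => hγc _ (hmemH h)
  have hdiff : ∀ p q r : V₁ ⊕ V₂ ⊕ Fin 6, H.Adj p q → H.Adj p r → q ≠ r →
      γ s(p, q) ≠ γ s(p, r) := by
    intro p q r h1 h2 hqr
    refine hγd _ (hmemH h1) _ (hmemH h2) ⟨?_, p, Sym2.mem_iff.mpr (Or.inl rfl),
      Sym2.mem_iff.mpr (Or.inl rfl)⟩
    intro hh
    rcases Sym2.eq_iff.mp hh with ⟨-, h⟩ | ⟨h1', h2'⟩
    · exact hqr h
    · exact hqr (h2'.trans h1')
  have tri : ∀ p a b c : V₁ ⊕ V₂ ⊕ Fin 6, H.Adj p a → H.Adj p b → H.Adj p c →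
      a ≠ b → a ≠ c → b ≠ c → γ s(p, a) + γ s(p, b) + γ s(p, c) = 0 :=
    fun p a b c h1 h2 h3 n1 n2 n3 =>
      color_sum3 (hcol _ _ h1) (hcol _ _ h2) (hcol _ _ h3)
        (hdiff _ _ _ h1 h2 n1) (hdiff _ _ _ h1 h3 n2) (hdiff _ _ _ h2 h3 n3)
  have hNu' : ∀ z, G2.Adj u z → z = um ∨ z = u0 ∨ z = up := by
    intro z hz
    have h3 : ({um, u0, up} : Set V₂) = G2.neighborSet u := by
      refine Set.eq_of_subset_of_ncard_le ?_ ?_ (Set.toFinite _)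
      · intro w hw
        simp only [Set.mem_insert_iff, Set.mem_singleton_iff] at hw
        rcases hw with rfl | rfl | rfl
        exacts [(G2.mem_neighborSet _ _).mpr hum, (G2.mem_neighborSet _ _).mpr hu0,
          (G2.mem_neighborSet _ _).mpr hup]
      · rw [hcub2 u, Set.ncard_eq_three.mpr ⟨um, u0, up, humu0, humup, hu0up, rfl⟩]
    have hz2 : z ∈ ({um, u0, up} : Set V₂) := by
      rw [h3]; exact (G2.mem_neighborSet _ _).mpr hz
    simpa using hz2
  have hNv' : ∀ z, G2.Adj v z → z = vm ∨ z = v0 ∨ z = vp := by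
    intro z hz
    have h3 : ({vm, v0, vp} : Set V₂) = G2.neighborSet v := by
      refine Set.eq_of_subset_of_ncard_le ?_ ?_ (Set.toFinite _)
      · intro w hw
        simp only [Set.mem_insert_iff, Set.mem_singleton_iff] at hw
        rcases hw with rfl | rfl | rfl
        exacts [(G2.mem_neighborSet _ _).mpr hvm, (G2.mem_neighborSet _ _).mpr hv0,
          (G2.mem_neighborSet _ _).mpr hvp]
      · rw [hcub2 v, Set.ncard_eq_three.mpr ⟨vm, v0, vp, hvmv0, hvmvp, hv0vp, rfl⟩]
    have hz2 : z ∈ ({vm, v0, vp} : Set V₂) := by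
      rw [h3]; exact (G2.mem_neighborSet _ _).mpr hz
    simpa using hz2
  have hNU' : ∀ x, G1.Adj U x → x = W ∨ x = Tm2 ∨ x = T2 := by
    intro x hx
    have h3 : ({W, Tm2, T2} : Set V₁) = G1.neighborSet U := by
      refine Set.eq_of_subset_of_ncard_le ?_ ?_ (Set.toFinite _)
      · intro w hw
        simp only [Set.mem_insert_iff, Set.mem_singleton_iff] at hw
        rcases hw with rfl | rfl | rfl
        exacts [(G1.mem_neighborSet _ _).mpr hUW, (G1.mem_neighborSet _ _).mpr hTm2,
          (G1.mem_neighborSet _ _).mpr hT2]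
      · rw [hcub1 U, Set.ncard_eq_three.mpr ⟨W, Tm2, T2, Ne.symm hTm2W, Ne.symm hT2W, hT, rfl⟩]
    have hz2 : x ∈ ({W, Tm2, T2} : Set V₁) := by
      rw [h3]; exact (G1.mem_neighborSet _ _).mpr hx
    simpa using hz2
  have hNW' : ∀ x, G1.Adj W x → x = U ∨ x = Wm2 ∨ x = W2 := by
    intro x hx
    have h3 : ({U, Wm2, W2} : Set V₁) = G1.neighborSet W := by
      refine Set.eq_of_subset_of_ncard_le ?_ ?_ (Set.toFinite _)
      · intro w hw
        simp only [Set.mem_insert_iff, Set.mem_singleton_iff] at hw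
        rcases hw with rfl | rfl | rfl
        exacts [(G1.mem_neighborSet _ _).mpr hUW.symm, (G1.mem_neighborSet _ _).mpr hWm2,
          (G1.mem_neighborSet _ _).mpr hW2]
      · rw [hcub1 W, Set.ncard_eq_three.mpr ⟨U, Wm2, W2, Ne.symm hWm2U, Ne.symm hW2U, hWd, rfl⟩]
    have hz2 : x ∈ ({U, Wm2, W2} : Set V₁) := by
      rw [h3]; exact (G1.mem_neighborSet _ _).mpr hx
    simpa using hz2
  have hI1 : ∀ x y : V₁, G1.Adj x y → x ≠ U → x ≠ W → y ≠ U → y ≠ W →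
      H.Adj (Sum.inl x) (Sum.inl y) :=
    fun x y ha h1 h2 h3 h4 => (hAdj _ _).mpr (Or.inl ⟨x, y, rfl, rfl, ha, h1, h2, h3, h4⟩)
  have hI2 : ∀ x y : V₂, G2.Adj x y → x ≠ u → x ≠ v → y ≠ u → y ≠ v →
      H.Adj (iV x) (iV y) :=
    fun x y ha h1 h2 h3 h4 =>
      (hAdj _ _).mpr (Or.inr (Or.inl ⟨x, y, rfl, rfl, ha, h1, h2, h3, h4⟩))
  have hIotaAdj : ∀ (z : V₂) (q : V₁ ⊕ V₂ ⊕ Fin 6), H.Adj (iV z) q →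
      (∃ w, q = iV w ∧ G2.Adj z w ∧ z ≠ u ∧ z ≠ v ∧ w ≠ u ∧ w ≠ v) ∨
      (z = um ∧ q = fV 0) ∨ (z = u0 ∧ q = fV 1) ∨ (z = up ∧ q = fV 2) ∨
      (z = vm ∧ q = fV 3) ∨ (z = v0 ∧ q = fV 4) ∨ (z = vp ∧ q = fV 5) := by
    intro z q h
    rcases (hAdj _ _).mp h with ⟨x, y, hp, hq, -, -, -, -, -⟩ |
      ⟨x, y, hp, hq, h3, h4, h5, h6, h7⟩ |
      h' | h' | h' | h' | h' | h' | h' | h' | h' | h' | h' | h' | h' | h'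
    · exact absurd hp (by simp [iV])
    · obtain rfl : z = x := by simpa [iV] using hp
      exact Or.inl ⟨y, hq, h3, h4, h5, h6, h7⟩
    · rcases h' with ⟨h1, -⟩ | ⟨h1, -⟩ <;> simp [iV, fV] at h1
    · rcases h' with ⟨h1, -⟩ | ⟨h1, -⟩ <;> simp [iV, fV] at h1
    · rcases h' with ⟨h1, -⟩ | ⟨h1, -⟩ <;> simp [iV, fV] at h1
    · rcases h' with ⟨h1, -⟩ | ⟨h1, -⟩ <;> simp [iV, fV] at h1
    · rcases h' with ⟨h1, -⟩ | ⟨h1, -⟩ <;> simp [iV, fV] at h1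
    · rcases h' with ⟨h1, -⟩ | ⟨h1, -⟩ <;> simp [iV, fV] at h1
    · rcases h' with ⟨h1, -⟩ | ⟨h1, -⟩ <;> simp [iV, fV] at h1
    · rcases h' with ⟨h1, -⟩ | ⟨h1, -⟩ <;> simp [iV, fV] at h1
    · rcases h' with ⟨h1, -⟩ | ⟨h1, h2⟩
      · exact absurd h1 (by simp [iV, fV])
      · exact Or.inr (Or.inl ⟨by simpa [iV] using h1, h2⟩)
    · rcases h' with ⟨h1, -⟩ | ⟨h1, h2⟩
      · exact absurd h1 (by simp [iV, fV])
      · exact Or.inr (Or.inr (Or.inl ⟨by simpa [iV] using h1, h2⟩))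
    · rcases h' with ⟨h1, -⟩ | ⟨h1, h2⟩
      · exact absurd h1 (by simp [iV, fV])
      · exact Or.inr (Or.inr (Or.inr (Or.inl ⟨by simpa [iV] using h1, h2⟩)))
    · rcases h' with ⟨h1, h2⟩ | ⟨h1, -⟩
      · exact Or.inr (Or.inr (Or.inr (Or.inr (Or.inl ⟨by simpa [iV] using h1, h2⟩))))
      · exact absurd h1 (by simp [iV, fV])
    · rcases h' with ⟨h1, h2⟩ | ⟨h1, -⟩
      · exact Or.inr (Or.inr (Or.inr (Or.inr (Or.inr (Or.inl ⟨by simpa [iV] using h1, h2⟩)))))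
      · exact absurd h1 (by simp [iV, fV])
    · rcases h' with ⟨h1, h2⟩ | ⟨h1, -⟩
      · exact Or.inr (Or.inr (Or.inr (Or.inr (Or.inr (Or.inr ⟨by simpa [iV] using h1, h2⟩)))))
      · exact absurd h1 (by simp [iV, fV])
  have hIsolu : ∀ q, ¬ H.Adj (iV u) q := by
    intro q h
    rcases hIotaAdj u q h with ⟨w, -, -, hzu, -, -, -⟩ | ⟨h1, -⟩ | ⟨h1, -⟩ | ⟨h1, -⟩ |
      ⟨h1, -⟩ | ⟨h1, -⟩ | ⟨h1, -⟩
    · exact hzu rfl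
    · exact hum.ne h1
    · exact hu0.ne h1
    · exact hup.ne h1
    · exact huvm h1
    · exact huv0 h1
    · exact huvp h1
  have hIsolv : ∀ q, ¬ H.Adj (iV v) q := by
    intro q h
    rcases hIotaAdj v q h with ⟨w, -, -, -, hzv, -, -⟩ | ⟨h1, -⟩ | ⟨h1, -⟩ | ⟨h1, -⟩ |
      ⟨h1, -⟩ | ⟨h1, -⟩ | ⟨h1, -⟩
    · exact hzv rfl
    · exact hvum h1
    · exact hvu0 h1
    · exact hvup h1
    · exact hvm.ne h1
    · exact hv0.ne h1
    · exact hvp.ne h1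
  have hNoCross : ∀ (z : V₂) (x : V₁), ¬ H.Adj (iV z) (Sum.inl x) := by
    intro z x h
    rcases hIotaAdj z _ h with ⟨w, hq, -, -, -, -, -⟩ | ⟨-, hq⟩ | ⟨-, hq⟩ | ⟨-, hq⟩ |
      ⟨-, hq⟩ | ⟨-, hq⟩ | ⟨-, hq⟩ <;> simp [iV, fV] at hq
  have hUq0 : ∀ z, H.Adj (iV z) (fV 0) → z = um := by
    intro z h
    rcases hIotaAdj z _ h with ⟨w, hq, -, -, -, -, -⟩ | ⟨h1, -⟩ | ⟨-, hq⟩ | ⟨-, hq⟩ | ⟨-, hq⟩ | ⟨-, hq⟩ | ⟨-, hq⟩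
    · exact absurd hq (by simp [iV, fV])
    · exact h1
    · exact absurd hq (by simp [fV])
    · exact absurd hq (by simp [fV])
    · exact absurd hq (by simp [fV])
    · exact absurd hq (by simp [fV])
    · exact absurd hq (by simp [fV])
  have hUq1 : ∀ z, H.Adj (iV z) (fV 1) → z = u0 := by
    intro z h
    rcases hIotaAdj z _ h with ⟨w, hq, -, -, -, -, -⟩ | ⟨-, hq⟩ | ⟨h1, -⟩ | ⟨-, hq⟩ | ⟨-, hq⟩ | ⟨-, hq⟩ | ⟨-, hq⟩
    · exact absurd hq (by simp [iV, fV])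
    · exact absurd hq (by simp [fV])
    · exact h1
    · exact absurd hq (by simp [fV])
    · exact absurd hq (by simp [fV])
    · exact absurd hq (by simp [fV])
    · exact absurd hq (by simp [fV])
  have hUq2 : ∀ z, H.Adj (iV z) (fV 2) → z = up := by
    intro z h
    rcases hIotaAdj z _ h with ⟨w, hq, -, -, -, -, -⟩ | ⟨-, hq⟩ | ⟨-, hq⟩ | ⟨h1, -⟩ | ⟨-, hq⟩ | ⟨-, hq⟩ | ⟨-, hq⟩
    · exact absurd hq (by simp [iV, fV])
    · exact absurd hq (by simp [fV])
    · exact absurd hq (by simp [fV])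
    · exact h1
    · exact absurd hq (by simp [fV])
    · exact absurd hq (by simp [fV])
    · exact absurd hq (by simp [fV])
  have hUq3 : ∀ z, H.Adj (iV z) (fV 3) → z = vm := by
    intro z h
    rcases hIotaAdj z _ h with ⟨w, hq, -, -, -, -, -⟩ | ⟨-, hq⟩ | ⟨-, hq⟩ | ⟨-, hq⟩ | ⟨h1, -⟩ | ⟨-, hq⟩ | ⟨-, hq⟩
    · exact absurd hq (by simp [iV, fV])
    · exact absurd hq (by simp [fV])
    · exact absurd hq (by simp [fV])
    · exact absurd hq (by simp [fV])
    · exact h1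
    · exact absurd hq (by simp [fV])
    · exact absurd hq (by simp [fV])
  have hUq4 : ∀ z, H.Adj (iV z) (fV 4) → z = v0 := by
    intro z h
    rcases hIotaAdj z _ h with ⟨w, hq, -, -, -, -, -⟩ | ⟨-, hq⟩ | ⟨-, hq⟩ | ⟨-, hq⟩ | ⟨-, hq⟩ | ⟨h1, -⟩ | ⟨-, hq⟩
    · exact absurd hq (by simp [iV, fV])
    · exact absurd hq (by simp [fV])
    · exact absurd hq (by simp [fV])
    · exact absurd hq (by simp [fV])
    · exact absurd hq (by simp [fV])
    · exact h1
    · exact absurd hq (by simp [fV])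
  have hUq5 : ∀ z, H.Adj (iV z) (fV 5) → z = vp := by
    intro z h
    rcases hIotaAdj z _ h with ⟨w, hq, -, -, -, -, -⟩ | ⟨-, hq⟩ | ⟨-, hq⟩ | ⟨-, hq⟩ | ⟨-, hq⟩ | ⟨-, hq⟩ | ⟨h1, -⟩
    · exact absurd hq (by simp [iV, fV])
    · exact absurd hq (by simp [fV])
    · exact absurd hq (by simp [fV])
    · exact absurd hq (by simp [fV])
    · exact absurd hq (by simp [fV])
    · exact absurd hq (by simp [fV])
    · exact h1
  have N1 : ∀ z w : V₂, z ≠ u → z ≠ v → G2.Adj z w →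
      H.Adj (iV z) (nmap2 u v um u0 up vm v0 vp z w) := by
    intro z w hzu hzv ha
    by_cases hwu : w = u
    · obtain h' | h' | h' := hNu' z (hwu ▸ ha.symm)
      · rw [hwu, h', nmap2_um]; exact hA9.symm
      · rw [hwu, h', nmap2_u0 (Ne.symm humu0)]; exact hA10.symm
      · rw [hwu, h', nmap2_up (Ne.symm humup) (Ne.symm hu0up)]; exact hA11.symm
    · by_cases hwv : w = v
      · obtain h' | h' | h' := hNv' z (hwv ▸ ha.symm)
        · rw [hwv, h', nmap2_vm (Ne.symm huv)]; exact hA12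
        · rw [hwv, h', nmap2_v0 (Ne.symm huv) (Ne.symm hvmv0)]; exact hA13
        · rw [hwv, h', nmap2_vp (Ne.symm huv) (Ne.symm hvmvp) (Ne.symm hv0vp)]; exact hA14
      · rw [nmap2_other hwu hwv]; exact hI2 z w ha hzu hzv hwu hwv
  have N3 : ∀ (z : V₂) (q : V₁ ⊕ V₂ ⊕ Fin 6), z ≠ u → z ≠ v → H.Adj (iV z) q →
      ∃ w, G2.Adj z w ∧ q = nmap2 u v um u0 up vm v0 vp z w := by
    intro z q hzu hzv h
    rcases hIotaAdj z q h with ⟨w, rfl, ha, -, -, hwu, hwv⟩ | ⟨rfl, rfl⟩ | ⟨rfl, rfl⟩ |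
      ⟨rfl, rfl⟩ | ⟨rfl, rfl⟩ | ⟨rfl, rfl⟩ | ⟨rfl, rfl⟩
    · exact ⟨w, ha, (nmap2_other hwu hwv).symm⟩
    · exact ⟨u, hum.symm, nmap2_um.symm⟩
    · exact ⟨u, hu0.symm, (nmap2_u0 (Ne.symm humu0)).symm⟩
    · exact ⟨u, hup.symm, (nmap2_up (Ne.symm humup) (Ne.symm hu0up)).symm⟩
    · exact ⟨v, hvm.symm, (nmap2_vm (Ne.symm huv)).symm⟩
    · exact ⟨v, hv0.symm, (nmap2_v0 (Ne.symm huv) (Ne.symm hvmv0)).symm⟩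
    · exact ⟨v, hvp.symm, (nmap2_vp (Ne.symm huv) (Ne.symm hvmvp) (Ne.symm hv0vp)).symm⟩
  have hVS : ∀ z : V₂,
      (∑ y : V₁ ⊕ V₂ ⊕ Fin 6, if H.Adj (iV z) y then γ s(iV z, y) else 0) = 0 := by
    intro z
    by_cases hzu : z = u
    · rw [hzu]; exact Finset.sum_eq_zero fun y _ => if_neg (hIsolu y)
    by_cases hzv : z = v
    · rw [hzv]; exact Finset.sum_eq_zero fun y _ => if_neg (hIsolv y)
    obtain ⟨a, b, c, hab, hac, hbc, hN⟩ := Set.ncard_eq_three.mp (hcub2 z)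
    have hmem3 : ∀ w, w ∈ ({a, b, c} : Set V₂) → G2.Adj z w := by
      intro w hw; rw [← hN] at hw; exact (G2.mem_neighborSet _ _).mp hw
    have haz : G2.Adj z a := hmem3 a (by simp)
    have hbz : G2.Adj z b := hmem3 b (by simp)
    have hcz : G2.Adj z c := hmem3 c (by simp)
    have nab : (nmap2 u v um u0 up vm v0 vp z a : V₁ ⊕ V₂ ⊕ Fin 6) ≠ nmap2 u v um u0 up vm v0 vp z b :=
      fun hh => hab (nmap2_inj hh)
    have nac : (nmap2 u v um u0 up vm v0 vp z a : V₁ ⊕ V₂ ⊕ Fin 6) ≠ nmap2 u v um u0 up vm v0 vp z c :=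
      fun hh => hac (nmap2_inj hh)
    have nbc : (nmap2 u v um u0 up vm v0 vp z b : V₁ ⊕ V₂ ⊕ Fin 6) ≠ nmap2 u v um u0 up vm v0 vp z c :=
      fun hh => hbc (nmap2_inj hh)
    have hzero : ∀ y ∈ (Finset.univ : Finset (V₁ ⊕ V₂ ⊕ Fin 6)),
        y ∉ ({nmap2 u v um u0 up vm v0 vp z a, nmap2 u v um u0 up vm v0 vp z b,
          nmap2 u v um u0 up vm v0 vp z c} : Finset (V₁ ⊕ V₂ ⊕ Fin 6)) →
        (if H.Adj (iV z) y then γ s(iV z, y) else 0) = 0 := by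
      intro y _ hy
      rw [if_neg]
      intro ha'
      obtain ⟨w, hw, hyw⟩ := N3 z y hzu hzv ha'
      have hw3 : w = a ∨ w = b ∨ w = c := by
        have hmm : w ∈ ({a, b, c} : Set V₂) := by
          rw [← hN]; exact (G2.mem_neighborSet _ _).mpr hw
        simpa using hmm
      rw [hyw] at hy
      apply hy
      rcases hw3 with rfl | rfl | rfl <;> simp
    rw [← Finset.sum_subset (Finset.subset_univ _) hzero]
    rw [Finset.sum_insert (by simp [nab, nac]), Finset.sum_insert (by simp [nbc]),
      Finset.sum_singleton]
    rw [if_pos (N1 z a hzu hzv haz), if_pos (N1 z b hzu hzv hbz), if_pos (N1 z c hzu hzv hcz),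
      ← add_assoc]
    exact tri (iV z) _ _ _ (N1 z a hzu hzv haz) (N1 z b hzu hzv hbz) (N1 z c hzu hzv hcz)
      nab nac nbc
  have hS0 : (∑ z : V₂, ∑ y : V₁ ⊕ V₂ ⊕ Fin 6,
      if H.Adj (iV z) y then γ s(iV z, y) else 0) = 0 :=
    Finset.sum_eq_zero fun z _ => hVS z
  have hsplit : ∀ z : V₂,
      (∑ y : V₁ ⊕ V₂ ⊕ Fin 6, if H.Adj (iV z) y then γ s(iV z, y) else 0)
        = (∑ x : V₁, if H.Adj (iV z) (Sum.inl x) then γ s(iV z, Sum.inl x) else 0)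
          + ((∑ w : V₂, if H.Adj (iV z) (iV w) then γ s(iV z, iV w) else 0)
            + (∑ i : Fin 6, if H.Adj (iV z) (fV i) then γ s(iV z, fV i) else 0)) := by
    intro z
    simp only [Fintype.sum_sum_type]
    rfl
  have hterm1 : (∑ z : V₂, ∑ x : V₁,
      if H.Adj (iV z) (Sum.inl x) then γ s(iV z, Sum.inl x) else 0) = 0 :=
    Finset.sum_eq_zero fun z _ => Finset.sum_eq_zero fun x _ => if_neg (hNoCross z x)
  have hterm2 : (∑ z : V₂, ∑ w : V₂,
      if H.Adj (iV z) (iV w) then γ s(iV z, iV w) else 0) = 0 := by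
    rw [← Finset.sum_product']
    refine Finset.sum_involution (fun p _ => (p.2, p.1)) ?_ ?_ (fun p hp => Finset.mem_univ _) ?_
    · intro p _
      by_cases h : H.Adj (iV p.1) (iV p.2)
      · rw [if_pos h, if_pos h.symm,
          show (s(iV p.2, iV p.1) : Sym2 (V₁ ⊕ V₂ ⊕ Fin 6)) = s(iV p.1, iV p.2) from
            Sym2.eq_swap]
        exact color_add_self _
      · rw [if_neg h, if_neg fun hh => h hh.symm, add_zero]
    · intro p _ hf hh
      have hadj2 : H.Adj (iV p.1) (iV p.2) := by
        by_contra hc; exact hf (if_neg hc)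
      have h2 : p.2 = p.1 := congrArg Prod.fst hh
      exact hadj2.ne (by rw [h2])
    · intro p _; rfl
  have e0 : (∑ z : V₂, if H.Adj (iV z) (fV 0) then γ s(iV z, fV 0) else 0)
      = γ s(iV um, fV 0) := by
    rw [Finset.sum_eq_single um (fun b _ hb => if_neg fun ha => hb (hUq0 b ha))
      (fun hh => absurd (Finset.mem_univ _) hh), if_pos hA9.symm]
  have e1 : (∑ z : V₂, if H.Adj (iV z) (fV 1) then γ s(iV z, fV 1) else 0)
      = γ s(iV u0, fV 1) := by
    rw [Finset.sum_eq_single u0 (fun b _ hb => if_neg fun ha => hb (hUq1 b ha))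
      (fun hh => absurd (Finset.mem_univ _) hh), if_pos hA10.symm]
  have e2 : (∑ z : V₂, if H.Adj (iV z) (fV 2) then γ s(iV z, fV 2) else 0)
      = γ s(iV up, fV 2) := by
    rw [Finset.sum_eq_single up (fun b _ hb => if_neg fun ha => hb (hUq2 b ha))
      (fun hh => absurd (Finset.mem_univ _) hh), if_pos hA11.symm]
  have e3 : (∑ z : V₂, if H.Adj (iV z) (fV 3) then γ s(iV z, fV 3) else 0)
      = γ s(iV vm, fV 3) := by
    rw [Finset.sum_eq_single vm (fun b _ hb => if_neg fun ha => hb (hUq3 b ha))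
      (fun hh => absurd (Finset.mem_univ _) hh), if_pos hA12]
  have e4 : (∑ z : V₂, if H.Adj (iV z) (fV 4) then γ s(iV z, fV 4) else 0)
      = γ s(iV v0, fV 4) := by
    rw [Finset.sum_eq_single v0 (fun b _ hb => if_neg fun ha => hb (hUq4 b ha))
      (fun hh => absurd (Finset.mem_univ _) hh), if_pos hA13]
  have e5 : (∑ z : V₂, if H.Adj (iV z) (fV 5) then γ s(iV z, fV 5) else 0)
      = γ s(iV vp, fV 5) := by
    rw [Finset.sum_eq_single vp (fun b _ hb => if_neg fun ha => hb (hUq5 b ha))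
      (fun hh => absurd (Finset.mem_univ _) hh), if_pos hA14]
  have hterm3 : (∑ z : V₂, ∑ i : Fin 6,
      if H.Adj (iV z) (fV i) then γ s(iV z, fV i) else 0)
      = γ s(iV um, fV 0) + γ s(iV u0, fV 1) + γ s(iV up, fV 2) + γ s(iV vm, fV 3)
        + γ s(iV v0, fV 4) + γ s(iV vp, fV 5) := by
    rw [Finset.sum_comm]
    simp only [Fin.sum_univ_six]
    rw [e0, e1, e2, e3, e4, e5]
  have hsum6 : γ s(iV um, fV 0) + γ s(iV u0, fV 1) + γ s(iV up, fV 2) + γ s(iV vm, fV 3)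
      + γ s(iV v0, fV 4) + γ s(iV vp, fV 5) = 0 := by
    have h2 := hS0
    rw [Finset.sum_congr rfl fun z _ => hsplit z] at h2
    rw [Finset.sum_add_distrib, Finset.sum_add_distrib, hterm1, hterm2, hterm3,
      zero_add, zero_add] at h2
    exact h2
  rw [show (s(iV um, fV 0) : Sym2 (V₁ ⊕ V₂ ⊕ Fin 6)) = s(fV 0, iV um) from Sym2.eq_swap,
    show (s(iV u0, fV 1) : Sym2 (V₁ ⊕ V₂ ⊕ Fin 6)) = s(fV 1, iV u0) from Sym2.eq_swap,
    show (s(iV up, fV 2) : Sym2 (V₁ ⊕ V₂ ⊕ Fin 6)) = s(fV 2, iV up) from Sym2.eq_swap] at hsum6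
  have hF0eq := tri (fV 0) (Sum.inl Tm2) (fV 1) (iV um) hA1.symm hA2 hA9
    (by simp [fV]) (by simp [fV, iV]) (by simp [fV, iV])
  rw [show (s(fV 0, Sum.inl Tm2) : Sym2 (V₁ ⊕ V₂ ⊕ Fin 6)) = s(Sum.inl Tm2, fV 0) from
    Sym2.eq_swap] at hF0eq
  have hF1eq := tri (fV 1) (fV 0) (fV 2) (iV u0) hA2.symm hA3 hA10
    (by simp [fV]) (by simp [fV, iV]) (by simp [fV, iV])
  rw [show (s(fV 1, fV 0) : Sym2 (V₁ ⊕ V₂ ⊕ Fin 6)) = s(fV 0, fV 1) from Sym2.eq_swap] at hF1eq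
  have hF2eq := tri (fV 2) (fV 1) (Sum.inl T2) (iV up) hA3.symm hA4 hA11
    (by simp [fV]) (by simp [fV, iV]) (by simp [fV, iV])
  rw [show (s(fV 2, fV 1) : Sym2 (V₁ ⊕ V₂ ⊕ Fin 6)) = s(fV 1, fV 2) from Sym2.eq_swap] at hF2eq
  have hF3eq := tri (fV 3) (Sum.inl Wm2) (fV 4) (iV vm) hA5.symm hA6 hA12.symm
    (by simp [fV]) (by simp [fV, iV]) (by simp [fV, iV])
  rw [show (s(fV 3, Sum.inl Wm2) : Sym2 (V₁ ⊕ V₂ ⊕ Fin 6)) = s(Sum.inl Wm2, fV 3) from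
      Sym2.eq_swap,
    show (s(fV 3, iV vm) : Sym2 (V₁ ⊕ V₂ ⊕ Fin 6)) = s(iV vm, fV 3) from Sym2.eq_swap] at hF3eq
  have hF4eq := tri (fV 4) (fV 3) (fV 5) (iV v0) hA6.symm hA7 hA13.symm
    (by simp [fV]) (by simp [fV, iV]) (by simp [fV, iV])
  rw [show (s(fV 4, fV 3) : Sym2 (V₁ ⊕ V₂ ⊕ Fin 6)) = s(fV 3, fV 4) from Sym2.eq_swap,
    show (s(fV 4, iV v0) : Sym2 (V₁ ⊕ V₂ ⊕ Fin 6)) = s(iV v0, fV 4) from Sym2.eq_swap] at hF4eq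
  have hF5eq := tri (fV 5) (fV 4) (Sum.inl W2) (iV vp) hA7.symm hA8 hA14.symm
    (by simp [fV]) (by simp [fV, iV]) (by simp [fV, iV])
  rw [show (s(fV 5, fV 4) : Sym2 (V₁ ⊕ V₂ ⊕ Fin 6)) = s(fV 4, fV 5) from Sym2.eq_swap,
    show (s(fV 5, iV vp) : Sym2 (V₁ ⊕ V₂ ⊕ Fin 6)) = s(iV vp, fV 5) from Sym2.eq_swap] at hF5eq
  have hs1eq : γ s(fV 0, iV um) + γ s(fV 1, iV u0) + γ s(fV 2, iV up)
      = γ s(Sum.inl Tm2, fV 0) + γ s(fV 2, Sum.inl T2) := by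
    linear_combination hF0eq + hF1eq + hF2eq - color_add_self (γ s(fV 0, fV 1))
      - color_add_self (γ s(fV 1, fV 2)) - color_add_self (γ s(Sum.inl Tm2, fV 0))
      - color_add_self (γ s(fV 2, Sum.inl T2))
  have hs2eq : γ s(iV vm, fV 3) + γ s(iV v0, fV 4) + γ s(iV vp, fV 5)
      = γ s(Sum.inl Wm2, fV 3) + γ s(fV 5, Sum.inl W2) := by
    linear_combination hF3eq + hF4eq + hF5eq - color_add_self (γ s(fV 3, fV 4))
      - color_add_self (γ s(fV 4, fV 5)) - color_add_self (γ s(Sum.inl Wm2, fV 3))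
      - color_add_self (γ s(fV 5, Sum.inl W2))
  have hs12 : γ s(fV 0, iV um) + γ s(fV 1, iV u0) + γ s(fV 2, iV up)
      = γ s(iV vm, fV 3) + γ s(iV v0, fV 4) + γ s(iV vp, fV 5) := by
    linear_combination hsum6 - color_add_self (γ s(iV vm, fV 3))
      - color_add_self (γ s(iV v0, fV 4)) - color_add_self (γ s(iV vp, fV 5))
  by_cases hs0 : γ s(fV 0, iV um) + γ s(fV 1, iV u0) + γ s(fV 2, iV up) = 0
  · -- rainbow case: 3-edge-color G2
    have hs20 : γ s(iV vm, fV 3) + γ s(iV v0, fV 4) + γ s(iV vp, fV 5) = 0 := by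
      rw [← hs12]; exact hs0
    obtain ⟨hc01, hc02, hc12⟩ := color_distinct_of_sum (hcol _ _ hA9) (hcol _ _ hA10)
      (hcol _ _ hA11) hs0
    obtain ⟨hd01, hd02, hd12⟩ := color_distinct_of_sum (hcol _ _ hA12) (hcol _ _ hA13)
      (hcol _ _ hA14) hs20
    set γ₂ : Sym2 V₂ → Color := fun e =>
      if e = s(u, um) then γ s(fV 0, iV um)
      else if e = s(u, u0) then γ s(fV 1, iV u0)
      else if e = s(u, up) then γ s(fV 2, iV up)
      else if e = s(v, vm) then γ s(iV vm, fV 3)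
      else if e = s(v, v0) then γ s(iV v0, fV 4)
      else if e = s(v, vp) then γ s(iV vp, fV 5)
      else if e ∈ G2.edgeSet then γ (Sym2.map (iV : V₂ → V₁ ⊕ V₂ ⊕ Fin 6) e)
      else 0 with hg2
    have q21 : (s(u, u0) : Sym2 V₂) ≠ s(u, um) := by
      simp [Sym2.eq_iff, Ne.symm humu0, hum.ne]
    have q31 : (s(u, up) : Sym2 V₂) ≠ s(u, um) := by
      simp [Sym2.eq_iff, Ne.symm humup, hum.ne]
    have q32 : (s(u, up) : Sym2 V₂) ≠ s(u, u0) := by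
      simp [Sym2.eq_iff, Ne.symm hu0up, hu0.ne]
    have q41 : (s(v, vm) : Sym2 V₂) ≠ s(u, um) := by simp [Sym2.eq_iff, Ne.symm huv, hvum]
    have q42 : (s(v, vm) : Sym2 V₂) ≠ s(u, u0) := by simp [Sym2.eq_iff, Ne.symm huv, hvu0]
    have q43 : (s(v, vm) : Sym2 V₂) ≠ s(u, up) := by simp [Sym2.eq_iff, Ne.symm huv, hvup]
    have q51 : (s(v, v0) : Sym2 V₂) ≠ s(u, um) := by simp [Sym2.eq_iff, Ne.symm huv, hvum]
    have q52 : (s(v, v0) : Sym2 V₂) ≠ s(u, u0) := by simp [Sym2.eq_iff, Ne.symm huv, hvu0]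
    have q53 : (s(v, v0) : Sym2 V₂) ≠ s(u, up) := by simp [Sym2.eq_iff, Ne.symm huv, hvup]
    have q54 : (s(v, v0) : Sym2 V₂) ≠ s(v, vm) := by
      simp [Sym2.eq_iff, Ne.symm hvmv0, hvm.ne]
    have q61 : (s(v, vp) : Sym2 V₂) ≠ s(u, um) := by simp [Sym2.eq_iff, Ne.symm huv, hvum]
    have q62 : (s(v, vp) : Sym2 V₂) ≠ s(u, u0) := by simp [Sym2.eq_iff, Ne.symm huv, hvu0]
    have q63 : (s(v, vp) : Sym2 V₂) ≠ s(u, up) := by simp [Sym2.eq_iff, Ne.symm huv, hvup]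
    have q64 : (s(v, vp) : Sym2 V₂) ≠ s(v, vm) := by
      simp [Sym2.eq_iff, Ne.symm hvmvp, hvm.ne]
    have q65 : (s(v, vp) : Sym2 V₂) ≠ s(v, v0) := by
      simp [Sym2.eq_iff, Ne.symm hv0vp, hv0.ne]
    have gv1 : γ₂ s(u, um) = γ s(fV 0, iV um) := by
      rw [hg2]; exact if_pos rfl
    have gv2 : γ₂ s(u, u0) = γ s(fV 1, iV u0) := by
      rw [hg2]; exact (if_neg q21).trans (if_pos rfl)
    have gv3 : γ₂ s(u, up) = γ s(fV 2, iV up) := by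
      rw [hg2]; exact (if_neg q31).trans ((if_neg q32).trans (if_pos rfl))
    have gv4 : γ₂ s(v, vm) = γ s(iV vm, fV 3) := by
      rw [hg2]; exact (if_neg q41).trans ((if_neg q42).trans ((if_neg q43).trans (if_pos rfl)))
    have gv5 : γ₂ s(v, v0) = γ s(iV v0, fV 4) := by
      rw [hg2]
      exact (if_neg q51).trans ((if_neg q52).trans ((if_neg q53).trans ((if_neg q54).trans
        (if_pos rfl))))
    have gv6 : γ₂ s(v, vp) = γ s(iV vp, fV 5) := by
      rw [hg2]
      exact (if_neg q61).trans ((if_neg q62).trans ((if_neg q63).trans ((if_neg q64).trans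
        ((if_neg q65).trans (if_pos rfl)))))
    have hT4 : ∀ z w : V₂, z ≠ u → z ≠ v → G2.Adj z w →
        γ₂ s(z, w) = γ s(iV z, nmap2 u v um u0 up vm v0 vp z w) := by
      intro z w hzu hzv ha
      by_cases hwu : w = u
      · obtain h' | h' | h' := hNu' z (hwu ▸ ha.symm)
        · rw [hwu, h', show (s(um, u) : Sym2 V₂) = s(u, um) from Sym2.eq_swap, gv1, nmap2_um,
            show (s(fV 0, iV um) : Sym2 (V₁ ⊕ V₂ ⊕ Fin 6)) = s(iV um, fV 0) from Sym2.eq_swap]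
        · rw [hwu, h', show (s(u0, u) : Sym2 V₂) = s(u, u0) from Sym2.eq_swap, gv2,
            nmap2_u0 (Ne.symm humu0),
            show (s(fV 1, iV u0) : Sym2 (V₁ ⊕ V₂ ⊕ Fin 6)) = s(iV u0, fV 1) from Sym2.eq_swap]
        · rw [hwu, h', show (s(up, u) : Sym2 V₂) = s(u, up) from Sym2.eq_swap, gv3,
            nmap2_up (Ne.symm humup) (Ne.symm hu0up),
            show (s(fV 2, iV up) : Sym2 (V₁ ⊕ V₂ ⊕ Fin 6)) = s(iV up, fV 2) from Sym2.eq_swap]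
      · by_cases hwv : w = v
        · obtain h' | h' | h' := hNv' z (hwv ▸ ha.symm)
          · rw [hwv, h', show (s(vm, v) : Sym2 V₂) = s(v, vm) from Sym2.eq_swap, gv4,
              nmap2_vm (Ne.symm huv)]
          · rw [hwv, h', show (s(v0, v) : Sym2 V₂) = s(v, v0) from Sym2.eq_swap, gv5,
              nmap2_v0 (Ne.symm huv) (Ne.symm hvmv0)]
          · rw [hwv, h', show (s(vp, v) : Sym2 V₂) = s(v, vp) from Sym2.eq_swap, gv6,
              nmap2_vp (Ne.symm huv) (Ne.symm hvmvp) (Ne.symm hv0vp)]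
        · have m1 : (s(z, w) : Sym2 V₂) ≠ s(u, um) := by simp [Sym2.eq_iff, hzu, hwu]
          have m2 : (s(z, w) : Sym2 V₂) ≠ s(u, u0) := by simp [Sym2.eq_iff, hzu, hwu]
          have m3 : (s(z, w) : Sym2 V₂) ≠ s(u, up) := by simp [Sym2.eq_iff, hzu, hwu]
          have m4 : (s(z, w) : Sym2 V₂) ≠ s(v, vm) := by simp [Sym2.eq_iff, hzv, hwv]
          have m5 : (s(z, w) : Sym2 V₂) ≠ s(v, v0) := by simp [Sym2.eq_iff, hzv, hwv]
          have m6 : (s(z, w) : Sym2 V₂) ≠ s(v, vp) := by simp [Sym2.eq_iff, hzv, hwv]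
          rw [nmap2_other hwu hwv, hg2]
          exact (if_neg m1).trans ((if_neg m2).trans ((if_neg m3).trans ((if_neg m4).trans
            ((if_neg m5).trans ((if_neg m6).trans
              ((if_pos ((SimpleGraph.mem_edgeSet _).mpr ha)).trans
                (by rw [Sym2.map_pair_eq])))))))
    have p1 : ∀ e ∈ G2.edgeSet, γ₂ e ∈ colorSet := by
      intro e he
      obtain ⟨x, y, rfl⟩ := sym2_exists e
      have ha : G2.Adj x y := (SimpleGraph.mem_edgeSet _).mp he
      by_cases hxu : x = u
      · obtain h' | h' | h' := hNu' y (hxu ▸ ha)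
        · rw [hxu, h', gv1]; exact hcol _ _ hA9
        · rw [hxu, h', gv2]; exact hcol _ _ hA10
        · rw [hxu, h', gv3]; exact hcol _ _ hA11
      · by_cases hxv : x = v
        · obtain h' | h' | h' := hNv' y (hxv ▸ ha)
          · rw [hxv, h', gv4]; exact hcol _ _ hA12
          · rw [hxv, h', gv5]; exact hcol _ _ hA13
          · rw [hxv, h', gv6]; exact hcol _ _ hA14
        · rw [hT4 x y hxu hxv ha]; exact hcol _ _ (N1 x y hxu hxv ha)
    have p2 : ∀ e ∉ G2.edgeSet, γ₂ e = 0 := by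
      intro e he
      have n1 : e ≠ s(u, um) := fun hh => he (by rw [hh]; exact (SimpleGraph.mem_edgeSet _).mpr hum)
      have n2 : e ≠ s(u, u0) := fun hh => he (by rw [hh]; exact (SimpleGraph.mem_edgeSet _).mpr hu0)
      have n3 : e ≠ s(u, up) := fun hh => he (by rw [hh]; exact (SimpleGraph.mem_edgeSet _).mpr hup)
      have n4 : e ≠ s(v, vm) := fun hh => he (by rw [hh]; exact (SimpleGraph.mem_edgeSet _).mpr hvm)
      have n5 : e ≠ s(v, v0) := fun hh => he (by rw [hh]; exact (SimpleGraph.mem_edgeSet _).mpr hv0)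
      have n6 : e ≠ s(v, vp) := fun hh => he (by rw [hh]; exact (SimpleGraph.mem_edgeSet _).mpr hvp)
      rw [hg2]
      exact (if_neg n1).trans ((if_neg n2).trans ((if_neg n3).trans ((if_neg n4).trans
        ((if_neg n5).trans ((if_neg n6).trans (if_neg he))))))
    have p3 : ∀ e ∈ G2.edgeSet, ∀ f ∈ G2.edgeSet, EdgesAdj e f → γ₂ e ≠ γ₂ f := by
      intro e he f hf hEA
      obtain ⟨hef, x, hxe, hxf⟩ := hEA
      obtain ⟨y1, rfl⟩ := Sym2.mem_iff_exists.mp hxe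
      obtain ⟨y2, rfl⟩ := Sym2.mem_iff_exists.mp hxf
      have ha1 : G2.Adj x y1 := (SimpleGraph.mem_edgeSet _).mp he
      have ha2 : G2.Adj x y2 := (SimpleGraph.mem_edgeSet _).mp hf
      have hy12 : y1 ≠ y2 := fun hh => hef (by rw [hh])
      by_cases hxu : x = u
      · obtain h1' | h1' | h1' := hNu' y1 (hxu ▸ ha1) <;>
          obtain h2' | h2' | h2' := hNu' y2 (hxu ▸ ha2)
        · exact absurd (h1'.trans h2'.symm) hy12
        · rw [hxu, h1', h2', gv1, gv2]; exact hc01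
        · rw [hxu, h1', h2', gv1, gv3]; exact hc02
        · rw [hxu, h1', h2', gv2, gv1]; exact Ne.symm hc01
        · exact absurd (h1'.trans h2'.symm) hy12
        · rw [hxu, h1', h2', gv2, gv3]; exact hc12
        · rw [hxu, h1', h2', gv3, gv1]; exact Ne.symm hc02
        · rw [hxu, h1', h2', gv3, gv2]; exact Ne.symm hc12
        · exact absurd (h1'.trans h2'.symm) hy12
      · by_cases hxv : x = v
        · obtain h1' | h1' | h1' := hNv' y1 (hxv ▸ ha1) <;>
            obtain h2' | h2' | h2' := hNv' y2 (hxv ▸ ha2)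
          · exact absurd (h1'.trans h2'.symm) hy12
          · rw [hxv, h1', h2', gv4, gv5]; exact hd01
          · rw [hxv, h1', h2', gv4, gv6]; exact hd02
          · rw [hxv, h1', h2', gv5, gv4]; exact Ne.symm hd01
          · exact absurd (h1'.trans h2'.symm) hy12
          · rw [hxv, h1', h2', gv5, gv6]; exact hd12
          · rw [hxv, h1', h2', gv6, gv4]; exact Ne.symm hd02
          · rw [hxv, h1', h2', gv6, gv5]; exact Ne.symm hd12
          · exact absurd (h1'.trans h2'.symm) hy12
        · rw [hT4 x y1 hxu hxv ha1, hT4 x y2 hxu hxv ha2]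
          exact hdiff _ _ _ (N1 x y1 hxu hxv ha1) (N1 x y2 hxu hxv ha2)
            fun hh => hy12 (nmap2_inj hh)
    have hmem2 : γ₂ ∈ EC G2 := ⟨p1, p2, p3⟩
    rw [hEC2] at hmem2
    exact hmem2
  · -- non-rainbow case: 3-edge-color G1
    have hs2ne : γ s(iV vm, fV 3) + γ s(iV v0, fV 4) + γ s(iV vp, fV 5) ≠ 0 :=
      fun h => hs0 (hs12.trans h)
    have hETne : γ s(Sum.inl Tm2, fV 0) ≠ γ s(fV 2, Sum.inl T2) := by
      intro h; apply hs0; rw [hs1eq, h, color_add_self]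
    have hFWne : γ s(Sum.inl Wm2, fV 3) ≠ γ s(fV 5, Sum.inl W2) := by
      intro h; apply hs2ne; rw [hs2eq, h, color_add_self]
    have hcross : γ s(Sum.inl Tm2, fV 0) + γ s(fV 2, Sum.inl T2)
        = γ s(Sum.inl Wm2, fV 3) + γ s(fV 5, Sum.inl W2) := hs1eq.symm.trans (hs12.trans hs2eq)
    have hUWcol : γ s(Sum.inl Tm2, fV 0) + γ s(fV 2, Sum.inl T2) ∈ colorSet :=
      color_add_mem (hcol _ _ hA1) (hcol _ _ hA4) hETne
    set γ₁ : Sym2 V₁ → Color := fun e =>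
      if e = s(U, W) then γ s(Sum.inl Tm2, fV 0) + γ s(fV 2, Sum.inl T2)
      else if e = s(U, Tm2) then γ s(Sum.inl Tm2, fV 0)
      else if e = s(U, T2) then γ s(fV 2, Sum.inl T2)
      else if e = s(W, Wm2) then γ s(Sum.inl Wm2, fV 3)
      else if e = s(W, W2) then γ s(fV 5, Sum.inl W2)
      else if e ∈ G1.edgeSet then γ (Sym2.map (Sum.inl : V₁ → V₁ ⊕ V₂ ⊕ Fin 6) e)
      else 0 with hg1
    have r21 : (s(U, Tm2) : Sym2 V₁) ≠ s(U, W) := by simp [Sym2.eq_iff, hTm2W, hUW.ne]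
    have r31 : (s(U, T2) : Sym2 V₁) ≠ s(U, W) := by simp [Sym2.eq_iff, hT2W, hUW.ne]
    have r32 : (s(U, T2) : Sym2 V₁) ≠ s(U, Tm2) := by simp [Sym2.eq_iff, Ne.symm hT, hTm2.ne]
    have r41 : (s(W, Wm2) : Sym2 V₁) ≠ s(U, W) := by
      simp [Sym2.eq_iff, Ne.symm hUW.ne, hWm2U]
    have r42 : (s(W, Wm2) : Sym2 V₁) ≠ s(U, Tm2) := by
      simp [Sym2.eq_iff, Ne.symm hUW.ne, Ne.symm hTm2W]
    have r43 : (s(W, Wm2) : Sym2 V₁) ≠ s(U, T2) := by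
      simp [Sym2.eq_iff, Ne.symm hUW.ne, Ne.symm hT2W]
    have r51 : (s(W, W2) : Sym2 V₁) ≠ s(U, W) := by
      simp [Sym2.eq_iff, Ne.symm hUW.ne, hW2U]
    have r52 : (s(W, W2) : Sym2 V₁) ≠ s(U, Tm2) := by
      simp [Sym2.eq_iff, Ne.symm hUW.ne, Ne.symm hTm2W]
    have r53 : (s(W, W2) : Sym2 V₁) ≠ s(U, T2) := by
      simp [Sym2.eq_iff, Ne.symm hUW.ne, Ne.symm hT2W]
    have r54 : (s(W, W2) : Sym2 V₁) ≠ s(W, Wm2) := by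
      simp [Sym2.eq_iff, Ne.symm hWd, hWm2.ne]
    have kv1 : γ₁ s(U, W) = γ s(Sum.inl Tm2, fV 0) + γ s(fV 2, Sum.inl T2) := by
      rw [hg1]; exact if_pos rfl
    have kv2 : γ₁ s(U, Tm2) = γ s(Sum.inl Tm2, fV 0) := by
      rw [hg1]; exact (if_neg r21).trans (if_pos rfl)
    have kv3 : γ₁ s(U, T2) = γ s(fV 2, Sum.inl T2) := by
      rw [hg1]; exact (if_neg r31).trans ((if_neg r32).trans (if_pos rfl))
    have kv4 : γ₁ s(W, Wm2) = γ s(Sum.inl Wm2, fV 3) := by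
      rw [hg1]; exact (if_neg r41).trans ((if_neg r42).trans ((if_neg r43).trans (if_pos rfl)))
    have kv5 : γ₁ s(W, W2) = γ s(fV 5, Sum.inl W2) := by
      rw [hg1]
      exact (if_neg r51).trans ((if_neg r52).trans ((if_neg r53).trans ((if_neg r54).trans
        (if_pos rfl))))
    have M1 : ∀ x y : V₁, x ≠ U → x ≠ W → G1.Adj x y →
        H.Adj (Sum.inl x) (nmap1 U W Tm2 Wm2 x y) := by
      intro x y hxU hxW ha
      by_cases hyU : y = U
      · obtain h' | h' | h' := hNU' x (hyU ▸ ha.symm)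
        · exact absurd h' hxW
        · rw [hyU, h', nmap1_UTm2]; exact hA1
        · rw [hyU, h', nmap1_UT2 (Ne.symm hT)]; exact hA4.symm
      · by_cases hyW : y = W
        · obtain h' | h' | h' := hNW' x (hyW ▸ ha.symm)
          · exact absurd h' hxU
          · rw [hyW, h', nmap1_WWm2 (Ne.symm hUW.ne)]; exact hA5
          · rw [hyW, h', nmap1_WW2 (Ne.symm hUW.ne) (Ne.symm hWd)]; exact hA8.symm
        · rw [nmap1_other hyU hyW]; exact hI1 x y ha hxU hxW hyU hyW
    have hT3 : ∀ x y : V₁, x ≠ U → x ≠ W → G1.Adj x y →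
        γ₁ s(x, y) = γ s(Sum.inl x, nmap1 U W Tm2 Wm2 x y) := by
      intro x y hxU hxW ha
      by_cases hyU : y = U
      · obtain h' | h' | h' := hNU' x (hyU ▸ ha.symm)
        · exact absurd h' hxW
        · rw [hyU, h', show (s(Tm2, U) : Sym2 V₁) = s(U, Tm2) from Sym2.eq_swap, kv2,
            nmap1_UTm2]
        · rw [hyU, h', show (s(T2, U) : Sym2 V₁) = s(U, T2) from Sym2.eq_swap, kv3,
            nmap1_UT2 (Ne.symm hT),
            show (s(fV 2, Sum.inl T2) : Sym2 (V₁ ⊕ V₂ ⊕ Fin 6)) = s(Sum.inl T2, fV 2) from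
              Sym2.eq_swap]
      · by_cases hyW : y = W
        · obtain h' | h' | h' := hNW' x (hyW ▸ ha.symm)
          · exact absurd h' hxU
          · rw [hyW, h', show (s(Wm2, W) : Sym2 V₁) = s(W, Wm2) from Sym2.eq_swap, kv4,
              nmap1_WWm2 (Ne.symm hUW.ne)]
          · rw [hyW, h', show (s(W2, W) : Sym2 V₁) = s(W, W2) from Sym2.eq_swap, kv5,
              nmap1_WW2 (Ne.symm hUW.ne) (Ne.symm hWd),
              show (s(fV 5, Sum.inl W2) : Sym2 (V₁ ⊕ V₂ ⊕ Fin 6)) = s(Sum.inl W2, fV 5) from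
                Sym2.eq_swap]
        · have m1 : (s(x, y) : Sym2 V₁) ≠ s(U, W) := by simp [Sym2.eq_iff, hxU, hxW]
          have m2 : (s(x, y) : Sym2 V₁) ≠ s(U, Tm2) := by simp [Sym2.eq_iff, hxU, hyU]
          have m3 : (s(x, y) : Sym2 V₁) ≠ s(U, T2) := by simp [Sym2.eq_iff, hxU, hyU]
          have m4 : (s(x, y) : Sym2 V₁) ≠ s(W, Wm2) := by simp [Sym2.eq_iff, hxW, hyW]
          have m5 : (s(x, y) : Sym2 V₁) ≠ s(W, W2) := by simp [Sym2.eq_iff, hxW, hyW]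
          rw [nmap1_other hyU hyW, hg1]
          exact (if_neg m1).trans ((if_neg m2).trans ((if_neg m3).trans ((if_neg m4).trans
            ((if_neg m5).trans ((if_pos ((SimpleGraph.mem_edgeSet _).mpr ha)).trans
              (by rw [Sym2.map_pair_eq]))))))
    have pp1 : ∀ e ∈ G1.edgeSet, γ₁ e ∈ colorSet := by
      intro e he
      obtain ⟨x, y, rfl⟩ := sym2_exists e
      have ha : G1.Adj x y := (SimpleGraph.mem_edgeSet _).mp he
      by_cases hxU : x = U
      · obtain h' | h' | h' := hNU' y (hxU ▸ ha)
        · rw [hxU, h', kv1]; exact hUWcol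
        · rw [hxU, h', kv2]; exact hcol _ _ hA1
        · rw [hxU, h', kv3]; exact hcol _ _ hA4
      · by_cases hxW : x = W
        · obtain h' | h' | h' := hNW' y (hxW ▸ ha)
          · rw [hxW, h', show (s(W, U) : Sym2 V₁) = s(U, W) from Sym2.eq_swap, kv1]
            exact hUWcol
          · rw [hxW, h', kv4]; exact hcol _ _ hA5
          · rw [hxW, h', kv5]; exact hcol _ _ hA8
        · rw [hT3 x y hxU hxW ha]; exact hcol _ _ (M1 x y hxU hxW ha)
    have pp2 : ∀ e ∉ G1.edgeSet, γ₁ e = 0 := by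
      intro e he
      have n1 : e ≠ s(U, W) := fun hh => he (by rw [hh]; exact (SimpleGraph.mem_edgeSet _).mpr hUW)
      have n2 : e ≠ s(U, Tm2) := fun hh => he (by rw [hh]; exact (SimpleGraph.mem_edgeSet _).mpr hTm2)
      have n3 : e ≠ s(U, T2) := fun hh => he (by rw [hh]; exact (SimpleGraph.mem_edgeSet _).mpr hT2)
      have n4 : e ≠ s(W, Wm2) := fun hh => he (by rw [hh]; exact (SimpleGraph.mem_edgeSet _).mpr hWm2)
      have n5 : e ≠ s(W, W2) := fun hh => he (by rw [hh]; exact (SimpleGraph.mem_edgeSet _).mpr hW2)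
      rw [hg1]
      exact (if_neg n1).trans ((if_neg n2).trans ((if_neg n3).trans ((if_neg n4).trans
        ((if_neg n5).trans (if_neg he)))))
    have pp3 : ∀ e ∈ G1.edgeSet, ∀ f ∈ G1.edgeSet, EdgesAdj e f → γ₁ e ≠ γ₁ f := by
      intro e he f hf hEA
      obtain ⟨hef, x, hxe, hxf⟩ := hEA
      obtain ⟨y1, rfl⟩ := Sym2.mem_iff_exists.mp hxe
      obtain ⟨y2, rfl⟩ := Sym2.mem_iff_exists.mp hxf
      have ha1 : G1.Adj x y1 := (SimpleGraph.mem_edgeSet _).mp he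
      have ha2 : G1.Adj x y2 := (SimpleGraph.mem_edgeSet _).mp hf
      have hy12 : y1 ≠ y2 := fun hh => hef (by rw [hh])
      by_cases hxU : x = U
      · obtain h1' | h1' | h1' := hNU' y1 (hxU ▸ ha1) <;>
          obtain h2' | h2' | h2' := hNU' y2 (hxU ▸ ha2)
        · exact absurd (h1'.trans h2'.symm) hy12
        · rw [hxU, h1', h2', kv1, kv2]; intro h
          exact color_ne_zero (hcol _ _ hA4) (add_eq_left.mp h)
        · rw [hxU, h1', h2', kv1, kv3]; intro h
          exact color_ne_zero (hcol _ _ hA1) (add_eq_right.mp h)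
        · rw [hxU, h1', h2', kv2, kv1]; intro h
          exact color_ne_zero (hcol _ _ hA4) (add_eq_left.mp h.symm)
        · exact absurd (h1'.trans h2'.symm) hy12
        · rw [hxU, h1', h2', kv2, kv3]; exact hETne
        · rw [hxU, h1', h2', kv3, kv1]; intro h
          exact color_ne_zero (hcol _ _ hA1) (add_eq_right.mp h.symm)
        · rw [hxU, h1', h2', kv3, kv2]; exact Ne.symm hETne
        · exact absurd (h1'.trans h2'.symm) hy12
      · by_cases hxW : x = W
        · obtain h1' | h1' | h1' := hNW' y1 (hxW ▸ ha1) <;>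
            obtain h2' | h2' | h2' := hNW' y2 (hxW ▸ ha2)
          · exact absurd (h1'.trans h2'.symm) hy12
          · rw [hxW, h1', h2', show (s(W, U) : Sym2 V₁) = s(U, W) from Sym2.eq_swap, kv1, kv4,
              hcross]
            intro h
            exact color_ne_zero (hcol _ _ hA8) (add_eq_left.mp h)
          · rw [hxW, h1', h2', show (s(W, U) : Sym2 V₁) = s(U, W) from Sym2.eq_swap, kv1, kv5,
              hcross]
            intro h
            exact color_ne_zero (hcol _ _ hA5) (add_eq_right.mp h)
          · rw [hxW, h1', h2', kv4, show (s(W, U) : Sym2 V₁) = s(U, W) from Sym2.eq_swap, kv1,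
              hcross]
            intro h
            exact color_ne_zero (hcol _ _ hA8) (add_eq_left.mp h.symm)
          · exact absurd (h1'.trans h2'.symm) hy12
          · rw [hxW, h1', h2', kv4, kv5]; exact hFWne
          · rw [hxW, h1', h2', kv5, show (s(W, U) : Sym2 V₁) = s(U, W) from Sym2.eq_swap, kv1,
              hcross]
            intro h
            exact color_ne_zero (hcol _ _ hA5) (add_eq_right.mp h.symm)
          · rw [hxW, h1', h2', kv5, kv4]; exact Ne.symm hFWne
          · exact absurd (h1'.trans h2'.symm) hy12
        · rw [hT3 x y1 hxU hxW ha1, hT3 x y2 hxU hxW ha2]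
          exact hdiff _ _ _ (M1 x y1 hxU hxW ha1) (M1 x y2 hxU hxW ha2)
            fun hh => hy12 (nmap1_inj hh)
    have hmem1 : γ₁ ∈ EC G1 := ⟨pp1, pp2, pp3⟩
    rw [hEC1] at hmem1
    exact hmem1


end SnarkPaper
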